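/- Let T be a free finitely generated ℤₗ-module with a continuous action of G = I₁ ⊕ ⋯ ⊕ Iₙ where each Iᵢ ≅ ℤₗ, acting unipotently of level 2 (i.e. (g−1)² = 0 for all g ∈ G). Suppose the natural map α : T/T^G → ⊕ᵢ T/T^{Iᵢ} is an isomorphism. Then setting Vᵢ = α⁻¹(T/T^{Iᵢ}), each Vᵢ is G-invariant, Iⱼ acts trivially on Vᵢ for j ≠ i, and T/T^G = V₁ ⊕ ⋯ ⊕ Vₙ. -/
import Mathlib


/-- Let `T` be a free finitely generated `ℤₗ`-module with a (continuous) action of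
`G = I₁ ⊕ ⋯ ⊕ Iₙ`, each `Iᵢ ≅ ℤₗ` with topological generator `σ i`, acting unipotently of
level 2.  If the natural map `α : T/T^G → ⊕ᵢ T/T^{Iᵢ}` is an isomorphism, then the
submodules `Vᵢ = α⁻¹(T/T^{Iᵢ})` (realized by their preimages `Wᵢ` in `T`) are `G`-invariant,
`Iⱼ` acts trivially on `Vᵢ` for `j ≠ i`, and `T/T^G = V₁ ⊕ ⋯ ⊕ Vₙ`. -/
theorem stmt5 (l : ℕ) [Fact l.Prime] (T : Type) [AddCommGroup T] [Module ℤ_[l] T]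
    [Module.Free ℤ_[l] T] [Module.Finite ℤ_[l] T]
    (n : ℕ) (σ : Fin n → (T ≃ₗ[ℤ_[l]] T))
    (hcomm : ∀ i j, σ i * σ j = σ j * σ i)
    (huni : ∀ (i : Fin n) (x : T), σ i (σ i x - x) = σ i x - x)
    (TG : Submodule ℤ_[l] T)
    (hTG : TG = ⨅ i, LinearMap.ker ((σ i).toLinearMap - LinearMap.id))
    -- `α` is an isomorphism: the map `T → ⊕ᵢ T/T^{Iᵢ}`, whose kernel is `T^G`, is surjective
    (hα : Function.Surjective
      (LinearMap.pi
        (fun i => (LinearMap.ker ((σ i).toLinearMap - LinearMap.id)).mkQ)))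
    (W : Fin n → Submodule ℤ_[l] T)
    (hW : ∀ i, W i = ⨅ j, ⨅ (_ : j ≠ i),
      LinearMap.ker ((σ j).toLinearMap - LinearMap.id)) :
    (∀ (i k : Fin n), ∀ x ∈ W i, σ k x ∈ W i) ∧
    (∀ (i j : Fin n), j ≠ i → ∀ x ∈ W i, σ j x - x ∈ TG) ∧
    (⨆ i, (W i).map TG.mkQ) = ⊤ ∧
    iSupIndep (fun i => (W i).map TG.mkQ) := by

  have hc : ∀ i j (x : T), σ i (σ j x) = σ j (σ i x) := by
    intro i j x
    have := congr_fun (congrArg (DFunLike.coe) (hcomm i j)) x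
    simpa using this
  have hmemK : ∀ (i : Fin n) (x : T),
      x ∈ LinearMap.ker ((σ i).toLinearMap - LinearMap.id) ↔ σ i x = x := by
    intro i x
    simp [LinearMap.mem_ker, sub_eq_zero]
  have hWmem : ∀ (i : Fin n) (x : T), x ∈ W i ↔ ∀ j, j ≠ i → σ j x = x := by
    intro i x
    rw [hW]
    simp only [Submodule.mem_iInf, hmemK]
  have hTGmem : ∀ x : T, x ∈ TG ↔ ∀ i, σ i x = x := by
    intro x
    rw [hTG]
    simp only [Submodule.mem_iInf, hmemK]
  refine ⟨?_, ?_, ?_, ?_⟩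
  · -- G-invariance of W i
    intro i k x hx
    rw [hWmem] at hx ⊢
    intro j hj
    rw [hc j k x, hx j hj]
  · -- I_j acts trivially
    intro i j hj x hx
    rw [hWmem] at hx
    rw [hx j hj, sub_self]
    exact TG.zero_mem
  · -- sup is top
    rw [eq_top_iff]
    rintro xbar -
    obtain ⟨t, rfl⟩ := TG.mkQ_surjective xbar
    choose w hw using fun i =>
      hα (Pi.single i ((LinearMap.ker ((σ i).toLinearMap - LinearMap.id)).mkQ t))
    have hwW : ∀ i, w i ∈ W i := by
      intro i
      rw [hWmem]
      intro j hj
      have h1 := congr_fun (hw i) j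
      rw [LinearMap.pi_apply, Pi.single_eq_of_ne hj] at h1
      rw [← hmemK]
      exact (Submodule.Quotient.mk_eq_zero _).mp h1
    have hwK : ∀ i, σ i (w i) - w i = σ i t - t := by
      intro i
      have h1 := congr_fun (hw i) i
      rw [LinearMap.pi_apply, Pi.single_eq_same] at h1
      have h2 : w i - t ∈ LinearMap.ker ((σ i).toLinearMap - LinearMap.id) := by
        rw [← Submodule.Quotient.eq]
        exact h1
      rw [hmemK] at h2
      have h3 : σ i (w i) - σ i t = w i - t := by
        rw [← map_sub]; exact h2
      linear_combination (norm := abel) h3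
    have hd : t - ∑ i, w i ∈ TG := by
      rw [hTGmem]
      intro k
      have hsum : ∑ i, (σ k (w i) - w i) = σ k t - t := by
        rw [Finset.sum_eq_single k]
        · exact hwK k
        · intro j _ hj
          rw [(hWmem j (w j)).mp (hwW j) k (Ne.symm hj), sub_self]
        · intro h
          exact absurd (Finset.mem_univ k) h
      have : σ k (t - ∑ i, w i) = σ k t - ∑ i, σ k (w i) := by
        rw [map_sub, map_sum]
      rw [this]
      have h4 : ∑ i, σ k (w i) = ∑ i, w i + (σ k t - t) := by
        rw [← hsum, Finset.sum_sub_distrib]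
        abel
      rw [h4]
      abel
    have : TG.mkQ t = ∑ i, TG.mkQ (w i) := by
      rw [← map_sum, Submodule.mkQ_apply, Submodule.mkQ_apply, Submodule.Quotient.eq]
      exact hd
    rw [this]
    refine Submodule.sum_mem _ fun i _ => ?_
    exact Submodule.mem_iSup_of_mem i ⟨w i, hwW i, rfl⟩
  · -- independence
    intro i
    rw [Submodule.disjoint_def]
    rintro xbar ⟨x, hxW, rfl⟩ hx2
    rw [show (⨆ j, ⨆ _ : j ≠ i, (W j).map TG.mkQ)
        = Submodule.map TG.mkQ (⨆ j, ⨆ _ : j ≠ i, W j) by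
      simp only [Submodule.map_iSup]] at hx2
    obtain ⟨y, hy, hyx⟩ := hx2
    have hyK : σ i y = y := by
      have hle : (⨆ j, ⨆ _ : j ≠ i, W j)
          ≤ LinearMap.ker ((σ i).toLinearMap - LinearMap.id) := by
        refine iSup_le fun j => iSup_le fun hj => ?_
        rw [hW j]
        exact iInf_le_of_le i (iInf_le_of_le hj.symm le_rfl)
      exact (hmemK i y).mp (hle hy)
    have hxy : x - y ∈ TG := by
      rw [← Submodule.Quotient.eq]
      exact hyx.symm
    have hxi : σ i x = x := by
      have := (hTGmem _).mp hxy i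
      have h5 : σ i x - σ i y = x - y := by rw [← map_sub]; exact this
      rw [hyK] at h5
      linear_combination (norm := abel) h5
    have : x ∈ TG := by
      rw [hTGmem]
      intro k
      by_cases hk : k = i
      · rw [hk]; exact hxi
      · exact (hWmem i x).mp hxW k hk
    rw [Submodule.mkQ_apply, Submodule.Quotient.mk_eq_zero]
    exact this
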